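/- arXiv:2005.00236 — 2 statements merged into one kernel-verified Lean document; each statement's English description precedes it below -/
import Mathlib

section
/- Let X ⊆ ℝ be a bounded measurable set, let a < b be real numbers, and let η, η_1, η_2, … : ℝ → ℝ be measurable functions such that sup_{x∈X} |η_k(x) − η(x)| → 0 as k → ∞. Assume the boundary preimage is Lebesgue-null: Leb({x ∈ X : η(x) = a or η(x) = b}) = 0. Then Leb({x ∈ X : η_k(x) ∈ [a,b]}) → Leb({x ∈ X : η(x) ∈ [a,b]}) as k → ∞. -/
open MeasureTheory Filter Topology

/-- Lemma 2 (prior continuity) of the paper: if `η_k → η` uniformly on a bounded measurable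
set `X ⊆ ℝ` and the boundary preimage `{x ∈ X : η x = a ∨ η x = b}` is Lebesgue-null, then
the Lebesgue measures of the sets `{x ∈ X : η_k x ∈ [a,b]}` converge to that of
`{x ∈ X : η x ∈ [a,b]}`. -/
theorem measure_preimage_Icc_tendsto_of_tendstoUniformlyOn
    (X : Set ℝ) (hXb : Bornology.IsBounded X) (hXm : MeasurableSet X)
    (a b : ℝ) (hab : a < b)
    (η : ℝ → ℝ) (ηk : ℕ → ℝ → ℝ)
    (hη : Measurable η) (hηk : ∀ k, Measurable (ηk k))
    (hunif : TendstoUniformlyOn ηk η atTop X)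
    (hboundary : volume {x ∈ X | η x = a ∨ η x = b} = 0) :
    Tendsto (fun k => volume {x ∈ X | ηk k x ∈ Set.Icc a b}) atTop
      (𝓝 (volume {x ∈ X | η x ∈ Set.Icc a b})) := by
  have hXfin : volume X < ⊤ := hXb.measure_lt_top
  have hset : ∀ (f : ℝ → ℝ) (s : Set ℝ), {x ∈ X | f x ∈ s} = X ∩ f ⁻¹' s := by
    intro f s; ext x; simp [Set.mem_inter_iff, and_comm]
  simp only [hset]
  -- measure of the open-interval version equals the closed one
  have hIoo : volume (X ∩ η ⁻¹' Set.Ioo a b) = volume (X ∩ η ⁻¹' Set.Icc a b) := by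
    apply le_antisymm (measure_mono (Set.inter_subset_inter_right _
      (Set.preimage_mono Set.Ioo_subset_Icc_self)))
    have hsub : X ∩ η ⁻¹' Set.Icc a b ⊆
        (X ∩ η ⁻¹' Set.Ioo a b) ∪ {x ∈ X | η x = a ∨ η x = b} := by
      rintro x ⟨hxX, hxa, hxb⟩
      rcases eq_or_lt_of_le hxa with h | h
      · exact Or.inr ⟨hxX, Or.inl h.symm⟩
      rcases eq_or_lt_of_le hxb with h' | h'
      · exact Or.inr ⟨hxX, Or.inr h'⟩
      exact Or.inl ⟨hxX, h, h'⟩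
    calc volume (X ∩ η ⁻¹' Set.Icc a b)
        ≤ volume ((X ∩ η ⁻¹' Set.Ioo a b) ∪ {x ∈ X | η x = a ∨ η x = b}) :=
          measure_mono hsub
      _ ≤ volume (X ∩ η ⁻¹' Set.Ioo a b) + volume {x ∈ X | η x = a ∨ η x = b} :=
          measure_union_le _ _
      _ = volume (X ∩ η ⁻¹' Set.Ioo a b) := by rw [hboundary, add_zero]
  rw [tendsto_order]
  constructor
  · -- lower bound
    intro c hc
    rw [← hIoo] at hc
    have hUnion : (⋃ n : ℕ, X ∩ η ⁻¹' Set.Icc (a + 1/(n+1)) (b - 1/(n+1)))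
        = X ∩ η ⁻¹' Set.Ioo a b := by
      ext x
      simp only [Set.mem_iUnion, Set.mem_inter_iff, Set.mem_preimage, Set.mem_Icc, Set.mem_Ioo]
      constructor
      · rintro ⟨n, hxX, h1, h2⟩
        have hn : (0:ℝ) < 1/(n+1) := by positivity
        exact ⟨hxX, lt_of_lt_of_le (by linarith) h1, lt_of_le_of_lt h2 (by linarith)⟩
      · rintro ⟨hxX, h1, h2⟩
        obtain ⟨n, hn⟩ := exists_nat_one_div_lt (lt_min (sub_pos.2 h1) (sub_pos.2 h2))
        refine ⟨n, hxX, ?_, ?_⟩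
        · have := lt_of_lt_of_le hn (min_le_left _ _); linarith
        · have := lt_of_lt_of_le hn (min_le_right _ _); linarith
    have hmono : Monotone (fun n : ℕ => X ∩ η ⁻¹' Set.Icc (a + 1/(n+1)) (b - 1/(n+1))) := by
      intro m n hmn
      apply Set.inter_subset_inter_right
      apply Set.preimage_mono
      apply Set.Icc_subset_Icc
      · have : (1:ℝ)/(n+1) ≤ 1/(m+1) := by
          apply one_div_le_one_div_of_le (by positivity)
          exact_mod_cast Nat.add_le_add_right hmn 1
        linarith
      · have : (1:ℝ)/(n+1) ≤ 1/(m+1) := by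
          apply one_div_le_one_div_of_le (by positivity)
          exact_mod_cast Nat.add_le_add_right hmn 1
        linarith
    have hsup := Directed.measure_iUnion (μ := volume) hmono.directed_le
    rw [hUnion] at hsup
    rw [hsup, lt_iSup_iff] at hc
    obtain ⟨n, hn⟩ := hc
    have hεpos : (0:ℝ) < 1/(n+1) := by positivity
    filter_upwards [Metric.tendstoUniformlyOn_iff.1 hunif (1/(n+1)) hεpos] with k hk
    refine lt_of_lt_of_le hn (measure_mono ?_)
    rintro x ⟨hxX, h1, h2⟩
    have hd := hk x hxX
    rw [Real.dist_eq, abs_sub_lt_iff] at hd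
    exact ⟨hxX, by constructor <;> linarith [hd.1, hd.2]⟩
  · -- upper bound
    intro c hc
    have hInter : (⋂ n : ℕ, X ∩ η ⁻¹' Set.Icc (a - 1/(n+1)) (b + 1/(n+1)))
        = X ∩ η ⁻¹' Set.Icc a b := by
      ext x
      simp only [Set.mem_iInter, Set.mem_inter_iff, Set.mem_preimage, Set.mem_Icc]
      constructor
      · intro h
        refine ⟨(h 0).1, ?_, ?_⟩
        · by_contra hlt
          push_neg at hlt
          obtain ⟨n, hn⟩ := exists_nat_one_div_lt (sub_pos.2 hlt)
          linarith [(h n).2.1]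
        · by_contra hlt
          push_neg at hlt
          obtain ⟨n, hn⟩ := exists_nat_one_div_lt (sub_pos.2 hlt)
          linarith [(h n).2.2]
      · rintro ⟨hxX, h1, h2⟩ n
        have hn : (0:ℝ) < 1/(n+1) := by positivity
        exact ⟨hxX, by linarith, by linarith⟩
    have hanti : Antitone (fun n : ℕ => X ∩ η ⁻¹' Set.Icc (a - 1/(n+1)) (b + 1/(n+1))) := by
      intro m n hmn
      apply Set.inter_subset_inter_right
      apply Set.preimage_mono
      apply Set.Icc_subset_Icc
      · have : (1:ℝ)/(n+1) ≤ 1/(m+1) := by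
          apply one_div_le_one_div_of_le (by positivity)
          exact_mod_cast Nat.add_le_add_right hmn 1
        linarith
      · have : (1:ℝ)/(n+1) ≤ 1/(m+1) := by
          apply one_div_le_one_div_of_le (by positivity)
          exact_mod_cast Nat.add_le_add_right hmn 1
        linarith
    have hmeas : ∀ n : ℕ, NullMeasurableSet (X ∩ η ⁻¹' Set.Icc (a - 1/(n+1)) (b + 1/(n+1))) :=
      fun n => (hXm.inter (hη measurableSet_Icc)).nullMeasurableSet
    have hinf := Directed.measure_iInter (μ := volume) hmeas
      hanti.directed_ge ⟨0, lt_of_le_of_lt (measure_mono Set.inter_subset_left) hXfin |>.ne⟩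
    rw [hInter] at hinf
    rw [hinf] at hc
    obtain ⟨n, hn⟩ := iInf_lt_iff.1 hc
    have hεpos : (0:ℝ) < 1/(n+1) := by positivity
    filter_upwards [Metric.tendstoUniformlyOn_iff.1 hunif (1/(n+1)) hεpos] with k hk
    refine lt_of_le_of_lt (measure_mono ?_) hn
    rintro x ⟨hxX, h1, h2⟩
    have hd := hk x hxX
    rw [Real.dist_eq, abs_sub_lt_iff] at hd
    exact ⟨hxX, by constructor <;> linarith [hd.1, hd.2]⟩
end

section
/- Let X ⊆ ℝ be a bounded measurable set, a < b real numbers, and η, η_1, η_2, … : ℝ → ℝ measurable with sup_{x∈X} |η_k(x) − η(x)| → 0. Write B(η) = {x ∈ X : η(x) ∈ [a,b]} and assume Leb({x ∈ X : η(x) = a or η(x) = b}) = 0 and Leb(B(η)) > 0. Then for every measurable set A ⊆ ℝ, the uniform-distribution probabilities converge: Leb(A ∩ B(η_k)) / Leb(B(η_k)) → Leb(A ∩ B(η)) / Leb(B(η)) as k → ∞. -/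
open MeasureTheory Filter Topology

/-- Second assertion of Lemma 2 of the paper: with `B(η) = {x ∈ X : η x ∈ [a,b]}`, if
`η_k → η` uniformly on the bounded measurable set `X`, the boundary preimage is
Lebesgue-null and `Leb(B(η)) > 0`, then for every measurable `A ⊆ ℝ` the uniform-distribution
probabilities `Leb(A ∩ B(η_k)) / Leb(B(η_k))` converge to `Leb(A ∩ B(η)) / Leb(B(η))`. -/
theorem uniform_prior_prob_tendsto_of_tendstoUniformlyOn
    (X : Set ℝ) (hXb : Bornology.IsBounded X) (hXm : MeasurableSet X)
    (a b : ℝ) (hab : a < b)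
    (η : ℝ → ℝ) (ηk : ℕ → ℝ → ℝ)
    (hη : Measurable η) (hηk : ∀ k, Measurable (ηk k))
    (hunif : TendstoUniformlyOn ηk η atTop X)
    (B : (ℝ → ℝ) → Set ℝ)
    (hB : ∀ f : ℝ → ℝ, B f = {x ∈ X | f x ∈ Set.Icc a b})
    (hboundary : volume {x ∈ X | η x = a ∨ η x = b} = 0)
    (hpos : 0 < volume (B η)) :
    ∀ A : Set ℝ, MeasurableSet A →
      Tendsto (fun k => volume (A ∩ B (ηk k)) / volume (B (ηk k))) atTop
        (𝓝 (volume (A ∩ B η) / volume (B η))) := by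
  have hXfin : volume X ≠ ⊤ := hXb.measure_lt_top.ne
  have hBX : B η ⊆ X := by rw [hB]; exact fun x hx => hx.1
  have hBfin : volume (B η) ≠ ⊤ := (lt_of_le_of_lt (measure_mono hBX) hXb.measure_lt_top).ne
  have hdist : ∀ k, ∀ δ : ℝ, 0 < δ → (∀ x ∈ X, dist (η x) (ηk k x) < δ) →
      ({x ∈ X | η x ∈ Set.Icc (a + δ) (b - δ)} ⊆ B (ηk k) ∧
       B (ηk k) ⊆ {x ∈ X | η x ∈ Set.Icc (a - δ) (b + δ)}) := by
    intro k δ hδ h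
    constructor
    · intro x hx
      rw [hB]
      refine ⟨hx.1, ?_, ?_⟩
      · have := abs_lt.1 ((Real.dist_eq _ _ ▸ h x hx.1))
        linarith [hx.2.1]
      · have := abs_lt.1 ((Real.dist_eq _ _ ▸ h x hx.1))
        linarith [hx.2.2]
    · intro x hx
      rw [hB] at hx
      have := abs_lt.1 ((Real.dist_eq _ _ ▸ h x hx.1))
      exact ⟨hx.1, by constructor <;> [linarith [hx.2.1]; linarith [hx.2.2]]⟩
  -- key: numerator convergence for any measurable A
  have key : ∀ A : Set ℝ, MeasurableSet A →
      Tendsto (fun k => volume (A ∩ B (ηk k))) atTop (𝓝 (volume (A ∩ B η))) := by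
    intro A hA
    set S : ℝ → Set ℝ := fun ε => {x ∈ X | η x ∈ Set.Icc (a - ε) (b + ε)} with hS
    set T : ℝ → Set ℝ := fun ε => {x ∈ X | η x ∈ Set.Icc (a + ε) (b - ε)} with hT
    have hSm : ∀ ε, MeasurableSet (S ε) := fun ε => hXm.inter (hη measurableSet_Icc)
    -- intersection limit (upper bound family)
    have hSanti : Antitone (fun n : ℕ => A ∩ S (1 / (n + 1))) := by
      intro n m hnm x hx
      refine ⟨hx.1, hx.2.1, ?_, ?_⟩
      · have h1 : (1 : ℝ) / (m + 1) ≤ 1 / (n + 1) := by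
          apply one_div_le_one_div_of_le (by positivity)
          exact_mod_cast Nat.succ_le_succ hnm
        linarith [hx.2.2.1]
      · have h1 : (1 : ℝ) / (m + 1) ≤ 1 / (n + 1) := by
          apply one_div_le_one_div_of_le (by positivity)
          exact_mod_cast Nat.succ_le_succ hnm
        linarith [hx.2.2.2]
    have hSinter : (⋂ n : ℕ, A ∩ S (1 / (n + 1))) = A ∩ B η := by
      ext x
      simp only [Set.mem_iInter, Set.mem_inter_iff, hB, Set.mem_setOf_eq, Set.mem_Icc]
      constructor
      · intro h
        refine ⟨(h 0).1, (h 0).2.1, ?_, ?_⟩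
        · by_contra hc
          push_neg at hc
          obtain ⟨n, hn⟩ := exists_nat_one_div_lt (by linarith : (0:ℝ) < a - η x)
          have := (h n).2.2.1
          linarith
        · by_contra hc
          push_neg at hc
          obtain ⟨n, hn⟩ := exists_nat_one_div_lt (by linarith : (0:ℝ) < η x - b)
          have := (h n).2.2.2
          linarith
      · intro h n
        have hp : (0:ℝ) < 1 / (n + 1) := by positivity
        exact ⟨h.1, h.2.1, by linarith [h.2.2.1], by linarith [h.2.2.2]⟩
    have hStend : Tendsto (fun n : ℕ => volume (A ∩ S (1 / (n + 1)))) atTop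
        (𝓝 (volume (A ∩ B η))) := by
      have := tendsto_measure_iInter_atTop (μ := volume)
        (s := fun n : ℕ => A ∩ S (1 / (n + 1)))
        (fun n => ((hA.inter (hSm _)).nullMeasurableSet)) hSanti
        ⟨0, by
          refine (lt_of_le_of_lt (measure_mono ?_) hXb.measure_lt_top).ne
          exact fun x hx => hx.2.1⟩
      rwa [hSinter] at this
    -- union limit (lower bound family)
    have hTmono : Monotone (fun n : ℕ => A ∩ T (1 / (n + 1))) := by
      intro n m hnm x hx
      have h1 : (1 : ℝ) / (m + 1) ≤ 1 / (n + 1) := by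
        apply one_div_le_one_div_of_le (by positivity)
        exact_mod_cast Nat.succ_le_succ hnm
      exact ⟨hx.1, hx.2.1, by linarith [hx.2.2.1], by linarith [hx.2.2.2]⟩
    have hTunion : (⋃ n : ℕ, A ∩ T (1 / (n + 1))) = A ∩ {x ∈ X | η x ∈ Set.Ioo a b} := by
      ext x
      simp only [Set.mem_iUnion, Set.mem_inter_iff, Set.mem_setOf_eq, Set.mem_Icc, Set.mem_Ioo]
      constructor
      · rintro ⟨n, hxA, hxX, h1, h2⟩
        have hp : (0:ℝ) < 1 / (n + 1) := by positivity
        exact ⟨hxA, hxX, by linarith, by linarith⟩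
      · rintro ⟨hxA, hxX, h1, h2⟩
        obtain ⟨n, hn⟩ := exists_nat_one_div_lt (lt_min (by linarith : (0:ℝ) < η x - a)
          (by linarith : (0:ℝ) < b - η x))
        have hn1 := lt_of_lt_of_le hn (min_le_left _ _)
        have hn2 := lt_of_lt_of_le hn (min_le_right _ _)
        exact ⟨n, hxA, hxX, by linarith, by linarith⟩
    have hOeq : volume (A ∩ {x ∈ X | η x ∈ Set.Ioo a b}) = volume (A ∩ B η) := by
      apply le_antisymm
      · apply measure_mono
        rintro x ⟨hxA, hxX, h1, h2⟩
        rw [hB]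
        exact ⟨hxA, hxX, le_of_lt h1, le_of_lt h2⟩
      · calc volume (A ∩ B η)
            ≤ volume ((A ∩ {x ∈ X | η x ∈ Set.Ioo a b}) ∪ {x ∈ X | η x = a ∨ η x = b}) := by
              apply measure_mono
              rintro x ⟨hxA, hxB⟩
              rw [hB] at hxB
              rcases eq_or_lt_of_le hxB.2.1 with h | h
              · exact Or.inr ⟨hxB.1, Or.inl h.symm⟩
              rcases eq_or_lt_of_le hxB.2.2 with h' | h'
              · exact Or.inr ⟨hxB.1, Or.inr h'⟩
              · exact Or.inl ⟨hxA, hxB.1, h, h'⟩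
          _ ≤ volume (A ∩ {x ∈ X | η x ∈ Set.Ioo a b}) + volume {x ∈ X | η x = a ∨ η x = b} :=
              measure_union_le _ _
          _ = volume (A ∩ {x ∈ X | η x ∈ Set.Ioo a b}) := by rw [hboundary, add_zero]
    have hTtend : Tendsto (fun n : ℕ => volume (A ∩ T (1 / (n + 1)))) atTop
        (𝓝 (volume (A ∩ B η))) := by
      have := tendsto_measure_iUnion_atTop (μ := volume)
        (s := fun n : ℕ => A ∩ T (1 / (n + 1))) hTmono
      rw [hTunion, hOeq] at this
      exact this
    -- sandwich
    rw [tendsto_order]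
    constructor
    · intro c hc
      obtain ⟨n, hn⟩ := (hTtend.eventually (eventually_gt_nhds hc)).exists
      have hδ : (0:ℝ) < 1 / (n + 1) := by positivity
      filter_upwards [Metric.tendstoUniformlyOn_iff.1 hunif _ hδ] with k hk
      exact lt_of_lt_of_le hn (measure_mono (Set.inter_subset_inter_right _
        (hdist k _ hδ hk).1))
    · intro c hc
      obtain ⟨n, hn⟩ := (hStend.eventually (eventually_lt_nhds hc)).exists
      have hδ : (0:ℝ) < 1 / (n + 1) := by positivity
      filter_upwards [Metric.tendstoUniformlyOn_iff.1 hunif _ hδ] with k hk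
      exact lt_of_le_of_lt (measure_mono (Set.inter_subset_inter_right _
        (hdist k _ hδ hk).2)) hn
  intro A hA
  have hden := key Set.univ MeasurableSet.univ
  simp only [Set.univ_inter] at hden
  exact ENNReal.Tendsto.div (key A hA) (Or.inr hpos.ne') hden (Or.inl hBfin)
end
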